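/- (Füredi's stability theorem) Every n-vertex K_{r+1}-free graph G contains an r-partite subgraph G₀ such that e(G) − e(G₀) ≤ e(T_r(n)) − e(G). -/

import Mathlib

open SimpleGraph Finset

section Helpers

variable {V : Type*} {W : Type*}

/-- Restriction of a graph to pairs of vertices satisfying `p` and `q` (in either order). -/
def SimpleGraph.restrictPQ (G : SimpleGraph V) (p q : V → Prop) : SimpleGraph V where
  Adj a b := G.Adj a b ∧ ((p a ∧ q b) ∨ (p b ∧ q a))
  symm := ⟨fun _ _ ⟨h, h2⟩ => ⟨h.symm, h2.symm⟩⟩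
  loopless := ⟨fun a h => G.loopless.irrefl a h.1⟩

lemma restrictPQ_le (G : SimpleGraph V) (p q : V → Prop) : G.restrictPQ p q ≤ G :=
  fun _ _ h => h.1

@[simp] lemma restrictPQ_adj (G : SimpleGraph V) (p q : V → Prop) (a b : V) :
    (G.restrictPQ p q).Adj a b ↔ G.Adj a b ∧ ((p a ∧ q b) ∨ (p b ∧ q a)) := Iff.rfl

lemma edgeSet_disjoint_of_adj {P Q : SimpleGraph V} (h : ∀ a b, P.Adj a b → ¬ Q.Adj a b) :
    Disjoint P.edgeSet Q.edgeSet := by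
  rw [Set.disjoint_left]
  intro e hP hQ
  revert hP hQ
  induction e using Sym2.ind with
  | _ a b => intro hP hQ; exact h a b ((P.mem_edgeSet).mp hP) ((Q.mem_edgeSet).mp hQ)

lemma ncard_edgeSet_sup [Finite V] {P Q : SimpleGraph V} (h : ∀ a b, P.Adj a b → ¬ Q.Adj a b) :
    (P ⊔ Q).edgeSet.ncard = P.edgeSet.ncard + Q.edgeSet.ncard := by
  rw [edgeSet_sup,
    Set.ncard_union_eq (edgeSet_disjoint_of_adj h) (Set.toFinite _) (Set.toFinite _)]

lemma count_deg_bound [Fintype V] [DecidableEq V] (G X Y : SimpleGraph V)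
    [DecidableRel G.Adj] [DecidableRel X.Adj] [DecidableRel Y.Adj] (B : Finset V) (D : ℕ)
    (hX : X ≤ G) (hY : Y ≤ G)
    (hXB : ∀ a b, X.Adj a b → (a ∈ B ∧ b ∉ B) ∨ (a ∉ B ∧ b ∈ B))
    (hYB : ∀ a b, Y.Adj a b → a ∈ B ∧ b ∈ B)
    (hD : ∀ v ∈ B, G.degree v ≤ D) :
    #(X.edgeFinset) + 2 * #Y.edgeFinset ≤ #B * D := by
  classical
  set S : Finset (V × V) := B.biUnion (fun v => {v} ×ˢ G.neighborFinset v) with hS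
  have hmemS : ∀ p : V × V, p ∈ S ↔ p.1 ∈ B ∧ G.Adj p.1 p.2 := by
    rintro ⟨a, b⟩
    simp only [hS, Finset.mem_biUnion, Finset.mem_product, Finset.mem_singleton,
      mem_neighborFinset]
    constructor
    · rintro ⟨v, hv, rfl, h⟩; exact ⟨hv, h⟩
    · rintro ⟨hv, h⟩; exact ⟨a, hv, rfl, h⟩
  have hScard : #S = ∑ v ∈ B, G.degree v := by
    rw [Finset.card_biUnion]
    · apply Finset.sum_congr rfl
      intro v _
      rw [Finset.card_product, Finset.card_singleton, one_mul]
      rfl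
    · intro a _ b _ hab
      simp only [Finset.disjoint_left, Finset.mem_product, Finset.mem_singleton]
      rintro ⟨x, y⟩ ⟨rfl, _⟩ ⟨rfl, _⟩
      exact hab rfl
  have hSle : #S ≤ #B * D := by
    rw [hScard]
    calc ∑ v ∈ B, G.degree v ≤ ∑ _v ∈ B, D := Finset.sum_le_sum hD
    _ = #B * D := by rw [Finset.sum_const, smul_eq_mul]
  set T1 : Finset (V × V) := univ.filter (fun p : V × V => X.Adj p.1 p.2 ∧ p.1 ∈ B) with hT1
  set T2 : Finset (V × V) := univ.filter (fun p : V × V => Y.Adj p.1 p.2) with hT2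
  have hsub : T1 ∪ T2 ⊆ S := by
    intro p hp
    rw [Finset.mem_union, hT1, hT2, Finset.mem_filter, Finset.mem_filter] at hp
    rw [hmemS]
    rcases hp with ⟨_, h, hB⟩ | ⟨_, h⟩
    · exact ⟨hB, hX h⟩
    · exact ⟨(hYB _ _ h).1, hY h⟩
  have hdisj : Disjoint T1 T2 := by
    rw [Finset.disjoint_left]
    rintro ⟨a, b⟩ h1 h2
    rw [hT1, Finset.mem_filter] at h1
    rw [hT2, Finset.mem_filter] at h2
    rcases hXB a b h1.2.1 with ⟨_, hb⟩ | ⟨ha, _⟩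
    · exact hb (hYB a b h2.2).2
    · exact ha h1.2.2
  have h1 : #T1 = #(X.edgeFinset) := by
    apply Finset.card_bij (s := T1) (t := X.edgeFinset) (fun p _ => s(p.1, p.2))
    · rintro ⟨a, b⟩ hp
      rw [hT1, Finset.mem_filter] at hp
      exact mem_edgeFinset.mpr (X.mem_edgeSet.mpr hp.2.1)
    · rintro ⟨a, b⟩ hp ⟨c, e⟩ hq hpq
      rw [hT1, Finset.mem_filter] at hp hq
      rw [Sym2.eq_iff] at hpq
      rcases hpq with ⟨rfl, rfl⟩ | ⟨h1, h2⟩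
      · rfl
      · subst h1; subst h2
        exfalso
        rcases hXB _ _ hq.2.1 with ⟨_, he⟩ | ⟨hc, _⟩
        · exact he hp.2.2
        · exact hc hq.2.2
    · intro e he
      rw [mem_edgeFinset] at he
      revert he
      induction e using Sym2.ind with
      | _ a b =>
        intro he
        rw [X.mem_edgeSet] at he
        rcases hXB a b he with ⟨ha, _⟩ | ⟨_, hb⟩
        · exact ⟨(a, b), by rw [hT1, Finset.mem_filter]; exact ⟨Finset.mem_univ _, he, ha⟩, rfl⟩
        · exact ⟨(b, a), by rw [hT1, Finset.mem_filter]; exact ⟨Finset.mem_univ _, he.symm, hb⟩,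
            Sym2.eq_swap⟩
  have h2 : #T2 = 2 * #Y.edgeFinset := by
    rw [Y.two_mul_card_edgeFinset, hT2]
  calc #(X.edgeFinset) + 2 * #Y.edgeFinset = #T1 + #T2 := by rw [h1, h2]
  _ = #(T1 ∪ T2) := (Finset.card_union_of_disjoint hdisj).symm
  _ ≤ #S := Finset.card_le_card hsub
  _ ≤ #B * D := hSle

lemma ncard_cross_edges [Fintype V] [DecidableEq V] (A : Finset V) :
    ((⊤ : SimpleGraph V).restrictPQ (· ∈ A) (· ∉ A)).edgeSet.ncard = #A * #Aᶜ := by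
  classical
  set K := (⊤ : SimpleGraph V).restrictPQ (· ∈ A) (· ∉ A) with hK
  rw [show K.edgeSet.ncard = #K.edgeFinset by rw [← coe_edgeFinset, Set.ncard_coe_finset]]
  have key : 2 * #K.edgeFinset = 2 * (#A * #Aᶜ) := by
    rw [K.two_mul_card_edgeFinset]
    have : (univ.filter fun (x, y) => K.Adj x y) = A ×ˢ Aᶜ ∪ Aᶜ ×ˢ A := by
      ext ⟨a, b⟩
      simp only [Finset.mem_filter, Finset.mem_univ, true_and, Finset.mem_union,
        Finset.mem_product, Finset.mem_compl, hK, SimpleGraph.restrictPQ, top_adj]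
      constructor
      · rintro ⟨hne, ⟨h1, h2⟩ | ⟨h1, h2⟩⟩
        · exact Or.inl ⟨h1, h2⟩
        · exact Or.inr ⟨h2, h1⟩
      · rintro (⟨h1, h2⟩ | ⟨h1, h2⟩)
        · exact ⟨fun h => h2 (h ▸ h1), Or.inl ⟨h1, h2⟩⟩
        · exact ⟨fun h => h1 (h ▸ h2), Or.inr ⟨h2, h1⟩⟩
    rw [this, Finset.card_union_of_disjoint, Finset.card_product, Finset.card_product]
    · ring
    · rw [Finset.disjoint_left]
      rintro ⟨a, b⟩ h1 h2
      rw [Finset.mem_product] at h1 h2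
      exact (Finset.mem_compl.mp h2.1) h1.1
  omega

lemma ncard_edgeSet_map (f : V ↪ W) (G : SimpleGraph V) :
    (G.map f).edgeSet.ncard = G.edgeSet.ncard := by
  have himg : (G.map f).edgeSet = Sym2.map f '' G.edgeSet := by
    ext e
    induction e using Sym2.ind with
    | _ a b =>
      rw [mem_edgeSet, map_adj]
      constructor
      · rintro ⟨u, v, huv, rfl, rfl⟩
        exact ⟨s(u, v), G.mem_edgeSet.mpr huv, rfl⟩
      · rintro ⟨e', he', hmap⟩
        revert he' hmap
        induction e' using Sym2.ind with
        | _ u v =>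
          intro he' hmap
          rw [Sym2.map_pair_eq, Sym2.eq_iff] at hmap
          rcases hmap with ⟨rfl, rfl⟩ | ⟨rfl, rfl⟩
          · exact ⟨u, v, G.mem_edgeSet.mp he', rfl, rfl⟩
          · exact ⟨v, u, (G.mem_edgeSet.mp he').symm, rfl, rfl⟩
  rw [himg, Set.ncard_image_of_injective _ (Sym2.map.injective f.injective)]

lemma turan_compare (r d m : ℕ) (hr : 0 < r) (hdm : d ≤ m) :
    (turanGraph d r).edgeSet.ncard + d * (m - d) ≤ (turanGraph m (r + 1)).edgeSet.ncard := by
  classical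
  set f : Fin d ↪ Fin m := ⟨Fin.castLE hdm, Fin.castLE_injective hdm⟩ with hf
  set A : Finset (Fin m) := univ.filter (fun v => v.val < d) with hA
  have hmemA : ∀ v : Fin m, v ∈ A ↔ v.val < d := by
    intro v; rw [hA, Finset.mem_filter]; simp
  have hAeq : A = Finset.map f univ := by
    ext v
    rw [hmemA, Finset.mem_map]
    constructor
    · intro hv
      exact ⟨⟨v.val, hv⟩, Finset.mem_univ _, Fin.ext rfl⟩
    · rintro ⟨u, _, rfl⟩
      exact u.isLt
  have hAcard : #A = d := by rw [hAeq, Finset.card_map, Finset.card_univ, Fintype.card_fin]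
  set K := (⊤ : SimpleGraph (Fin m)).restrictPQ (· ∈ A) (· ∉ A) with hK
  set M := (turanGraph d r).map f with hM
  have hMA : ∀ a b : Fin m, M.Adj a b → a ∈ A ∧ b ∈ A := by
    rintro a b ⟨_, u, v, _, rfl, rfl⟩
    exact ⟨(hmemA _).mpr u.isLt, (hmemA _).mpr v.isLt⟩
  have hdj : ∀ a b : Fin m, M.Adj a b → ¬ K.Adj a b := by
    intro a b hMadj hKadj
    obtain ⟨hA1, hA2⟩ := hMA a b hMadj
    rcases hKadj.2 with ⟨_, h2⟩ | ⟨_, h2⟩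
    · exact h2 hA2
    · exact h2 hA1
  have h1 : (M ⊔ K).edgeSet.ncard = M.edgeSet.ncard + K.edgeSet.ncard := ncard_edgeSet_sup hdj
  have h2 : M.edgeSet.ncard = (turanGraph d r).edgeSet.ncard := ncard_edgeSet_map f _
  have h3 : K.edgeSet.ncard = d * (m - d) := by
    rw [hK, ncard_cross_edges, hAcard, Finset.card_compl, hAcard, Fintype.card_fin]
  have hcol : (M ⊔ K).Colorable (r + 1) := by
    refine ⟨SimpleGraph.Coloring.mk
      (fun a => if _ : a.val < d then ⟨a.val % r, lt_trans (Nat.mod_lt _ hr) (Nat.lt_succ_self r)⟩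
        else ⟨r, Nat.lt_succ_self r⟩) ?_⟩
    intro a b hadj
    rcases hadj with hMadj | hKadj
    · obtain ⟨_, u, v, huv, rfl, rfl⟩ := hMadj
      have hu : (f u).val < d := u.isLt
      have hv : (f v).val < d := v.isLt
      rw [dif_pos hu, dif_pos hv]
      intro hcontra
      apply huv
      have := congrArg Fin.val hcontra
      simpa [hf] using this
    · have hmod : ∀ x : ℕ, x % r < r := fun x => Nat.mod_lt _ hr
      rcases hKadj.2 with ⟨ha, hb⟩ | ⟨hb, ha⟩
      · rw [dif_pos ((hmemA a).mp ha), dif_neg (fun h => hb ((hmemA b).mpr h))]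
        intro hc
        have := congrArg Fin.val hc
        simp only at this
        exact absurd this (Nat.ne_of_lt (hmod _))
      · rw [dif_neg (fun h => ha ((hmemA a).mpr h)), dif_pos ((hmemA b).mp hb)]
        intro hc
        have := congrArg Fin.val hc
        simp only at this
        exact absurd this.symm (Nat.ne_of_lt (hmod _))
  have hcf : (M ⊔ K).CliqueFree (r + 2) := hcol.cliqueFree (Nat.lt_succ_self (r + 1))
  have hTM := (isTuranMaximal_turanGraph (show 0 < r + 1 by omega)).2 (G' := M ⊔ K) hcf
  rw [← Set.ncard_coe_finset, ← Set.ncard_coe_finset, coe_edgeFinset, coe_edgeFinset] at hTM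
  calc (turanGraph d r).edgeSet.ncard + d * (m - d)
      = M.edgeSet.ncard + K.edgeSet.ncard := by rw [h2, h3]
    _ = (M ⊔ K).edgeSet.ncard := h1.symm
    _ ≤ (turanGraph m (r + 1)).edgeSet.ncard := hTM

lemma furedi_aux {V : Type*} [Fintype V] [DecidableEq V] :
    ∀ (r : ℕ) (G : SimpleGraph V) (s : Finset V),
      (∀ a b, G.Adj a b → a ∈ s) → G.CliqueFreeOn ↑s (r + 1) →
      ∃ G₀, G₀ ≤ G ∧
        (∃ c : V → ℕ, (∀ a b, G₀.Adj a b → c a ≠ c b) ∧ ∀ a ∈ s, c a < r) ∧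
        2 * G.edgeSet.ncard ≤ G₀.edgeSet.ncard + (turanGraph (#s) r).edgeSet.ncard := by
  intro r
  induction r with
  | zero =>
    intro G s hs hcf
    have hsempty : s = ∅ := by
      rcases Finset.eq_empty_or_nonempty s with h | ⟨x, hx⟩
      · exact h
      · exact absurd (isNClique_singleton.mpr rfl)
          (hcf (show ↑({x} : Finset V) ⊆ (↑s : Set V) by simpa using hx))
    have hGbot : G = ⊥ := by
      ext a b
      simp only [bot_adj, iff_false]
      intro h
      have := hs a b h
      simp [hsempty] at this
    refine ⟨⊥, bot_le, ⟨fun _ => 0, by simp, by simp [hsempty]⟩, ?_⟩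
    rw [hGbot]
    simp
  | succ r ih =>
    intro G s hs hcf
    classical
    rcases Finset.eq_empty_or_nonempty s with rfl | hne
    · have hGbot : G = ⊥ := by
        ext a b
        simp only [bot_adj, iff_false]
        intro h
        simpa using hs a b h
      refine ⟨⊥, bot_le, ⟨fun _ => 0, by simp, by simp⟩, ?_⟩
      rw [hGbot]
      simp
    · obtain ⟨x, hxs, hxmax⟩ := Finset.exists_max_image s (fun v => G.degree v) hne
      set N := G.neighborFinset x with hNdef
      have hNs : N ⊆ s := by
        intro v hv
        rw [hNdef, mem_neighborFinset] at hv
        exact hs v x hv.symm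
      set GN := G.restrictPQ (· ∈ N) (· ∈ N) with hGNdef
      have hGNle : GN ≤ G := restrictPQ_le _ _ _
      have hGNadj : ∀ a b, GN.Adj a b → G.Adj a b ∧ a ∈ N ∧ b ∈ N := by
        rintro a b ⟨h, h2⟩
        exact ⟨h, by tauto, by tauto⟩
      have hGNcf : GN.CliqueFreeOn ↑N (r + 1) := by
        have h1 : G.CliqueFreeOn (↑s ∩ G.neighborSet x) (r + 1) :=
          SimpleGraph.CliqueFreeOn.of_succ G hcf (Finset.mem_coe.mpr hxs)
        have h2 : (↑N : Set V) ⊆ ↑s ∩ G.neighborSet x := by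
          intro v hv
          have hv' := hv
          rw [Finset.mem_coe, hNdef, mem_neighborFinset] at hv'
          exact ⟨hNs hv, hv'⟩
        exact SimpleGraph.CliqueFreeOn.anti GN G hGNle (SimpleGraph.CliqueFreeOn.subset G h2 h1)
      obtain ⟨H0, hH0le, ⟨cN, hcNval, hcNlt⟩, hcnt⟩ :=
        ih GN N (fun a b h => (hGNadj a b h).2.1) hGNcf
      set X := G.restrictPQ (· ∈ N) (· ∉ N) with hXdef
      set GB := G.restrictPQ (· ∉ N) (· ∉ N) with hGBdef
      have hXle : X ≤ G := restrictPQ_le _ _ _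
      have hGBle : GB ≤ G := restrictPQ_le _ _ _
      have hH0N : ∀ a b, H0.Adj a b → a ∈ N ∧ b ∈ N := fun a b h => (hGNadj a b (hH0le h)).2
      refine ⟨H0 ⊔ X, sup_le (hH0le.trans hGNle) hXle, ?_, ?_⟩
      · refine ⟨fun a => if a ∈ N then cN a else r, ?_, ?_⟩
        · intro a b hab
          dsimp only
          rcases hab with h | h
          · obtain ⟨haN, hbN⟩ := hH0N a b h
            rw [if_pos haN, if_pos hbN]
            exact hcNval a b h
          · rcases h.2 with ⟨h1, h2⟩ | ⟨h1, h2⟩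
            · rw [if_pos h1, if_neg h2]
              exact Nat.ne_of_lt (hcNlt a h1)
            · rw [if_neg h2, if_pos h1]
              exact (Nat.ne_of_lt (hcNlt b h1)).symm
        · intro a _
          dsimp only
          split_ifs with h
          · exact lt_trans (hcNlt a h) (Nat.lt_succ_self r)
          · exact Nat.lt_succ_self r
      · -- edge counting
        have hdisj1 : ∀ a b, GN.Adj a b → ¬ (X ⊔ GB).Adj a b := by
          intro a b hgn hx
          obtain ⟨_, haN, hbN⟩ := hGNadj a b hgn
          rcases hx with h | h
          · rcases h.2 with ⟨_, h2⟩ | ⟨_, h2⟩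
            · exact h2 hbN
            · exact h2 haN
          · rcases h.2 with ⟨h1, _⟩ | ⟨h1, _⟩
            · exact h1 haN
            · exact h1 hbN
        have hdisj2 : ∀ a b, X.Adj a b → ¬ GB.Adj a b := by
          intro a b hx hgb
          rcases hx.2 with ⟨h1, _⟩ | ⟨h1, _⟩
          · rcases hgb.2 with ⟨h3, _⟩ | ⟨_, h4⟩
            · exact h3 h1
            · exact h4 h1
          · rcases hgb.2 with ⟨_, h4⟩ | ⟨h3, _⟩
            · exact h4 h1
            · exact h3 h1
        have hdisj0 : ∀ a b, H0.Adj a b → ¬ X.Adj a b := by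
          intro a b h0 hx
          obtain ⟨haN, hbN⟩ := hH0N a b h0
          rcases hx.2 with ⟨_, h2⟩ | ⟨_, h2⟩
          · exact h2 hbN
          · exact h2 haN
        have hdecomp : G = GN ⊔ (X ⊔ GB) := by
          ext a b
          simp only [sup_adj, hGNdef, hXdef, hGBdef, restrictPQ_adj]
          constructor
          · intro h
            by_cases haN : a ∈ N <;> by_cases hbN : b ∈ N
            · exact Or.inl ⟨h, Or.inl ⟨haN, hbN⟩⟩
            · exact Or.inr (Or.inl ⟨h, Or.inl ⟨haN, hbN⟩⟩)
            · exact Or.inr (Or.inl ⟨h, Or.inr ⟨hbN, haN⟩⟩)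
            · exact Or.inr (Or.inr ⟨h, Or.inl ⟨haN, hbN⟩⟩)
          · rintro (⟨h, _⟩ | ⟨h, _⟩ | ⟨h, _⟩) <;> exact h
        have e1 : G.edgeSet.ncard =
            GN.edgeSet.ncard + (X.edgeSet.ncard + GB.edgeSet.ncard) := by
          conv_lhs => rw [hdecomp]
          rw [ncard_edgeSet_sup hdisj1, ncard_edgeSet_sup hdisj2]
        have e0 : (H0 ⊔ X).edgeSet.ncard = H0.edgeSet.ncard + X.edgeSet.ncard :=
          ncard_edgeSet_sup hdisj0
        have hXB : ∀ a b, X.Adj a b →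
            (a ∈ s \ N ∧ b ∉ s \ N) ∨ (a ∉ s \ N ∧ b ∈ s \ N) := by
          intro a b hx
          rcases hx.2 with ⟨h1, h2⟩ | ⟨h1, h2⟩
          · right
            exact ⟨fun hmem => (Finset.mem_sdiff.mp hmem).2 h1,
              Finset.mem_sdiff.mpr ⟨hs b a hx.1.symm, h2⟩⟩
          · left
            exact ⟨Finset.mem_sdiff.mpr ⟨hs a b hx.1, h2⟩,
              fun hmem => (Finset.mem_sdiff.mp hmem).2 h1⟩
        have hGBB : ∀ a b, GB.Adj a b → a ∈ s \ N ∧ b ∈ s \ N := by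
          intro a b h
          rcases h.2 with ⟨h1, h2⟩ | ⟨h1, h2⟩ <;>
            exact ⟨Finset.mem_sdiff.mpr ⟨hs a b h.1, by assumption⟩,
              Finset.mem_sdiff.mpr ⟨hs b a h.1.symm, by assumption⟩⟩
        have hD : ∀ v ∈ s \ N, G.degree v ≤ G.degree x :=
          fun v hv => hxmax v (Finset.mem_sdiff.mp hv).1
        have hbig := count_deg_bound G X GB (s \ N) (G.degree x) hXle hGBle hXB hGBB hD
        rw [← Set.ncard_coe_finset X.edgeFinset, ← Set.ncard_coe_finset GB.edgeFinset,
          coe_edgeFinset, coe_edgeFinset] at hbig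
        have hdN : #N = G.degree x := rfl
        have hcmp : (turanGraph (#N) r).edgeSet.ncard + #N * #(s \ N) ≤
            (turanGraph (#s) (r + 1)).edgeSet.ncard := by
          rcases Nat.eq_zero_or_pos r with hr0 | hrpos
          · subst hr0
            have hN0 : #N = 0 := by
              by_contra h
              obtain ⟨y, hy⟩ := Finset.card_pos.mp (Nat.pos_of_ne_zero h)
              rw [hNdef, mem_neighborFinset] at hy
              have hcf2 : G.CliqueFreeOn ↑s 2 := hcf
              rw [cliqueFreeOn_two] at hcf2
              exact hcf2 (Finset.mem_coe.mpr hxs)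
                (Finset.mem_coe.mpr (hs y x hy.symm)) hy.ne hy
            rw [hN0]
            have hbot : turanGraph 0 0 = (⊥ : SimpleGraph (Fin 0)) := by
              ext a b
              exact a.elim0
            rw [hbot]
            simp
          · have hle : #N ≤ #s := Finset.card_le_card hNs
            have hsd : #(s \ N) = #s - #N := Finset.card_sdiff_of_subset hNs
            rw [hsd]
            exact turan_compare r (#N) (#s) hrpos hle
        have hmc : #(s \ N) * G.degree x = #N * #(s \ N) := by rw [← hdN, Nat.mul_comm]
        rw [e0, e1]
        linarith [hcnt, hbig, hcmp, hmc]

end Helpers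

/-- Füredi's stability theorem: every `n`-vertex `K_{r+1}`-free graph `G` contains an
`r`-partite subgraph `G₀` such that `e(G) − e(G₀) ≤ e(T_r(n)) − e(G)`. -/
theorem furedi_stability (n r : ℕ) (G : SimpleGraph (Fin n)) (hG : G.CliqueFree (r + 1)) :
    ∃ G₀ : SimpleGraph (Fin n), G₀ ≤ G ∧ G₀.Colorable r ∧
      (G.edgeSet.ncard : ℤ) - (G₀.edgeSet.ncard : ℤ) ≤
        ((turanGraph n r).edgeSet.ncard : ℤ) - (G.edgeSet.ncard : ℤ) := by
  classical
  rcases isEmpty_or_nonempty (Fin n) with he | hne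
  · refine ⟨⊥, bot_le, ⟨⟨fun v => (he.false v).elim, fun {a} _ => (he.false a).elim⟩⟩, ?_⟩
    have hGbot : G = ⊥ := by
      ext a b
      exact (he.false a).elim
    rw [hGbot]
    simp only [edgeSet_bot, Set.ncard_empty, Nat.cast_zero, sub_zero, sub_self]
    exact Int.natCast_nonneg _
  · have hr : 0 < r := by
      by_contra h
      have hr0 : r = 0 := by omega
      subst hr0
      obtain ⟨x⟩ := hne
      exact hG {x} (isNClique_singleton.mpr rfl)
    obtain ⟨G₀, hle, ⟨c, hcval, hclt⟩, hcnt⟩ :=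
      furedi_aux r G Finset.univ (fun a b _ => Finset.mem_univ a)
        (by rw [Finset.coe_univ, cliqueFreeOn_univ]; exact hG)
    have hcard : #(Finset.univ : Finset (Fin n)) = n := by
      rw [Finset.card_univ, Fintype.card_fin]
    rw [hcard] at hcnt
    refine ⟨G₀, hle, ?_, ?_⟩
    · refine ⟨⟨fun v => ⟨c v, hclt v (Finset.mem_univ v)⟩, ?_⟩⟩
      intro a b hab hc
      exact hcval a b hab (congrArg Fin.val hc)
    · omega
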